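/- Let (G,I,O,λ) be a labelled open graph with gflow (g,≺). Form Γ' by adding a new vertex u' adjacent only to an input u ∈ I, setting I' = (I∖{u}) ∪ {u'}, and λ'(u') = XY. Then Γ' has a gflow: extend g by g'(u') = {u} and let ≺' be the transitive closure of ≺ ∪ {(u',w) : w ∈ N_G(u) ∪ {u}}. -/

import Mathlib

open Set

/-- The three measurement planes. -/
inductive MPlane | XY | XZ | YZ
deriving DecidableEq

/-- The odd neighbourhood of a set `K`: vertices with an odd number of neighbours in `K`. -/
def oddNbhd {V : Type*} (G : SimpleGraph V) (K : Set V) : Set V :=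
  {u | Odd (K ∩ G.neighborSet u).ncard}

/-- `(g, prec)` is a gflow for the labelled open graph `(G, I, O, lam)`. -/
structure GFlow {V : Type*} (G : SimpleGraph V) (I O : Set V) (lam : V → MPlane)
    (g : V → Set V) (prec : V → V → Prop) : Prop where
  irrefl : ∀ v, ¬ prec v v
  trans : ∀ u v w, prec u v → prec v w → prec u w
  noInput : ∀ v, v ∉ O → g v ∩ I = ∅
  g1 : ∀ v, v ∉ O → ∀ w ∈ g v, w ≠ v → prec v w
  g2 : ∀ v, v ∉ O → ∀ w ∈ oddNbhd G (g v), w ≠ v → prec v w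
  gXY : ∀ v, v ∉ O → lam v = MPlane.XY → v ∉ g v ∧ v ∈ oddNbhd G (g v)
  gXZ : ∀ v, v ∉ O → lam v = MPlane.XZ → v ∈ g v ∧ v ∈ oddNbhd G (g v)
  gYZ : ∀ v, v ∉ O → lam v = MPlane.YZ → v ∈ g v ∧ v ∉ oddNbhd G (g v)

/-- The graph obtained from `G` by adding a fresh vertex (`none`) adjacent only to `u`. -/
def addVertex {V : Type*} (G : SimpleGraph V) (u : V) : SimpleGraph (Option V) where
  Adj x y := (∃ a b, x = some a ∧ y = some b ∧ G.Adj a b) ∨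
    (x = some u ∧ y = none) ∨ (x = none ∧ y = some u)
  symm := by
    constructor
    rintro x y (⟨a, b, rfl, rfl, hab⟩ | ⟨rfl, rfl⟩ | ⟨rfl, rfl⟩)
    · exact Or.inl ⟨b, a, rfl, rfl, hab.symm⟩
    · exact Or.inr (Or.inr ⟨rfl, rfl⟩)
    · exact Or.inr (Or.inl ⟨rfl, rfl⟩)
  loopless := by
    constructor
    rintro x (⟨a, b, rfl, hb, hab⟩ | ⟨rfl, h⟩ | ⟨rfl, h⟩)
    · cases hb; exact G.irrefl hab
    · exact Option.some_ne_none _ h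
    · exact (Option.some_ne_none _ h.symm)

section Aux

variable {V : Type*} (G : SimpleGraph V) (u : V)

lemma addVertex_adj_some_some (a b : V) :
    (addVertex G u).Adj (some a) (some b) ↔ G.Adj a b := by
  constructor
  · rintro (⟨a', b', h1, h2, hab⟩ | ⟨-, h2⟩ | ⟨h1, -⟩)
    · injection h1 with h1; injection h2 with h2; subst h1; subst h2; exact hab
    · exact absurd h2 (by simp)
    · exact absurd h1 (by simp)
  · intro hab; exact Or.inl ⟨a, b, rfl, rfl, hab⟩

lemma addVertex_nbhd_none :
    (addVertex G u).neighborSet none = {some u} := by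
  ext x
  rw [SimpleGraph.mem_neighborSet]
  constructor
  · rintro (⟨a, b, h1, -, -⟩ | ⟨h1, -⟩ | ⟨-, rfl⟩)
    · exact absurd h1 (by simp)
    · exact absurd h1 (by simp)
    · rfl
  · rintro rfl; exact Or.inr (Or.inr ⟨rfl, rfl⟩)

lemma addVertex_inter_some (K : Set V) (b : V) :
    (some '' K) ∩ (addVertex G u).neighborSet (some b) = some '' (K ∩ G.neighborSet b) := by
  ext x
  cases x with
  | none => simp
  | some c =>
      simp only [mem_inter_iff, mem_image, mem_inter_iff, SimpleGraph.mem_neighborSet,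
        Option.some.injEq]
      constructor
      · rintro ⟨⟨c', hc', rfl⟩, hadj⟩
        exact ⟨c', ⟨hc', (addVertex_adj_some_some G u b c').1 hadj⟩, rfl⟩
      · rintro ⟨c', ⟨hc', hadj⟩, rfl⟩
        exact ⟨⟨c', hc', rfl⟩, (addVertex_adj_some_some G u b c').2 hadj⟩

lemma addVertex_odd_some_image (K : Set V) (b : V) :
    some b ∈ oddNbhd (addVertex G u) (some '' K) ↔ b ∈ oddNbhd G K := by
  unfold oddNbhd
  simp only [mem_setOf_eq]
  rw [addVertex_inter_some, Set.ncard_image_of_injective _ (Option.some_injective V)]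

lemma addVertex_odd_none_image (K : Set V) (hK : u ∉ K) :
    none ∉ oddNbhd (addVertex G u) (some '' K) := by
  unfold oddNbhd
  simp only [mem_setOf_eq]
  have : (some '' K) ∩ (addVertex G u).neighborSet none = ∅ := by
    rw [addVertex_nbhd_none]
    rw [eq_empty_iff_forall_notMem]
    rintro x ⟨⟨c, hc, rfl⟩, hx⟩
    have : c = u := Option.some_injective V hx
    exact hK (this ▸ hc)
  rw [this]
  simp

lemma addVertex_odd_gu_none :
    none ∈ oddNbhd (addVertex G u) {some u} := by
  unfold oddNbhd
  simp only [mem_setOf_eq]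
  have : ({some u} : Set (Option V)) ∩ (addVertex G u).neighborSet none = {some u} := by
    rw [addVertex_nbhd_none, inter_self]
  rw [this, Set.ncard_singleton]
  exact odd_one

lemma addVertex_odd_gu_some (b : V) :
    some b ∈ oddNbhd (addVertex G u) {some u} ↔ G.Adj b u := by
  classical
  unfold oddNbhd
  simp only [mem_setOf_eq]
  have : ({some u} : Set (Option V)) ∩ (addVertex G u).neighborSet (some b)
      = if G.Adj b u then {some u} else ∅ := by
    split_ifs with hadj
    · ext x
      constructor
      · rintro ⟨hx, -⟩; exact hx
      · rintro rfl; exact ⟨rfl, (addVertex_adj_some_some G u b u).2 hadj⟩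
    · rw [eq_empty_iff_forall_notMem]
      rintro x ⟨rfl, hx⟩
      exact hadj ((addVertex_adj_some_some G u b u).1 hx)
  rw [this]
  split_ifs with hadj <;> simp [hadj, Nat.odd_iff]

variable {prec : V → V → Prop}

/-- Steps of the extended relation never end at `none`. -/
lemma transgen_not_none {x : Option V}
    (hx : Relation.TransGen (fun x y =>
        (∃ a b, x = some a ∧ y = some b ∧ prec a b) ∨
        (x = none ∧ ∃ w, y = some w ∧ (G.Adj u w ∨ w = u))) x none) : False := by
  rcases hx with h | ⟨-, h⟩ <;>
    rcases h with ⟨a, b, -, hb, -⟩ | ⟨-, w, hw, -⟩ <;> simp_all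

lemma transgen_some (htr : ∀ a b c, prec a b → prec b c → prec a c)
    {a : V} {y : Option V}
    (hy : Relation.TransGen (fun x y =>
        (∃ a b, x = some a ∧ y = some b ∧ prec a b) ∨
        (x = none ∧ ∃ w, y = some w ∧ (G.Adj u w ∨ w = u))) (some a) y) :
    ∃ b, y = some b ∧ prec a b := by
  induction hy with
  | single h =>
      rcases h with ⟨a', b', h1, rfl, hab⟩ | ⟨h1, -⟩
      · injection h1 with h1; subst h1; exact ⟨b', rfl, hab⟩
      · exact absurd h1 (by simp)
  | tail _ h ih =>
      obtain ⟨b, rfl, hab⟩ := ih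
      rcases h with ⟨a', b', h1, rfl, h2⟩ | ⟨h1, -⟩
      · injection h1 with h1; subst h1; exact ⟨b', rfl, htr _ _ _ hab h2⟩
      · exact absurd h1 (by simp)

end Aux

/-- Adding a new XY-measured vertex `u'` (modelled as `none`) 'before' the
input `u` preserves gflow, via `g'(u') = {u}` and the transitive closure of
`≺ ∪ {(u',w) : w ∈ N_G(u) ∪ {u}}`. -/
theorem gflow_addInput {V : Type*} [Fintype V]
    (G : SimpleGraph V) (I O : Set V) (lam : V → MPlane)
    (g : V → Set V) (prec : V → V → Prop)
    (h : GFlow G I O lam g prec) (u : V) (hu : u ∈ I) :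
    GFlow (addVertex G u)
      ((some '' (I \ {u})) ∪ {none})
      (some '' O)
      (fun x => x.elim MPlane.XY (fun v => lam v))
      (fun x => x.elim {some u} (fun v => some '' g v))
      (Relation.TransGen (fun x y =>
        (∃ a b, x = some a ∧ y = some b ∧ prec a b) ∨
        (x = none ∧ ∃ w, y = some w ∧ (G.Adj u w ∨ w = u)))) := by
  classical
  constructor
  -- irrefl
  case irrefl =>
    intro v hv
    cases v with
    | none => exact transgen_not_none G u hv
    | some a =>
        obtain ⟨b, hb, hab⟩ := transgen_some G u h.trans hv
        injection hb with hb
        subst hb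
        exact h.irrefl a hab
  -- trans
  case trans => exact fun _ _ _ h1 h2 => h1.trans h2
  -- noInput
  case noInput =>
    intro v hv
    cases v with
    | none =>
        rw [eq_empty_iff_forall_notMem]
        rintro x ⟨hx1, hx2⟩
        have hx1' : x = some u := hx1
        subst hx1'
        rcases hx2 with ⟨c, ⟨hcI, hcne⟩, hc⟩ | hx
        · exact hcne (Option.some_injective V hc)
        · exact absurd hx (by simp)
    | some v =>
        have hvO : v ∉ O := fun hx => hv (mem_image_of_mem _ hx)
        rw [eq_empty_iff_forall_notMem]
        rintro x ⟨⟨b, hb, rfl⟩, hx2⟩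
        rcases hx2 with ⟨c, ⟨hcI, -⟩, hc⟩ | hx
        · obtain rfl : c = b := Option.some_injective V hc
          exact eq_empty_iff_forall_notMem.mp (h.noInput v hvO) _ ⟨hb, hcI⟩
        · exact absurd hx (by simp)
  -- g1
  case g1 =>
    intro v hv w hw hne
    cases v with
    | none =>
        have hw' : w = some u := hw
        subst hw'
        exact Relation.TransGen.single (Or.inr ⟨rfl, u, rfl, Or.inr rfl⟩)
    | some a =>
        have haO : a ∉ O := fun hx => hv (mem_image_of_mem _ hx)
        obtain ⟨b, hb, rfl⟩ := hw
        have hbne : b ≠ a := fun hx => hne (by rw [hx])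
        exact Relation.TransGen.single (Or.inl ⟨a, b, rfl, rfl, h.g1 a haO b hb hbne⟩)
  -- g2
  case g2 =>
    intro v hv w hw hne
    cases v with
    | none =>
        cases w with
        | none => exact absurd rfl hne
        | some b =>
            have hadj : G.Adj b u := (addVertex_odd_gu_some G u b).1 hw
            exact Relation.TransGen.single (Or.inr ⟨rfl, b, rfl, Or.inl hadj.symm⟩)
    | some a =>
        have haO : a ∉ O := fun hx => hv (mem_image_of_mem _ hx)
        have hug : u ∉ g a := fun hx =>
          eq_empty_iff_forall_notMem.mp (h.noInput a haO) u ⟨hx, hu⟩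
        cases w with
        | none => exact absurd hw (addVertex_odd_none_image G u (g a) hug)
        | some b =>
            have hb : b ∈ oddNbhd G (g a) := (addVertex_odd_some_image G u (g a) b).1 hw
            have hbne : b ≠ a := fun hx => hne (by rw [hx])
            exact Relation.TransGen.single (Or.inl ⟨a, b, rfl, rfl, h.g2 a haO b hb hbne⟩)
  -- gXY
  case gXY =>
    intro v hv hlam
    cases v with
    | none =>
        refine ⟨?_, addVertex_odd_gu_none G u⟩
        intro hx
        exact absurd (show (none : Option V) = some u from hx) (by simp)
    | some a =>
        have haO : a ∉ O := fun hx => hv (mem_image_of_mem _ hx)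
        obtain ⟨h1, h2⟩ := h.gXY a haO hlam
        constructor
        · simpa using h1
        · exact (addVertex_odd_some_image G u (g a) a).2 h2
  -- gXZ
  case gXZ =>
    intro v hv hlam
    cases v with
    | none => exact absurd hlam (by simp)
    | some a =>
        have haO : a ∉ O := fun hx => hv (mem_image_of_mem _ hx)
        obtain ⟨h1, h2⟩ := h.gXZ a haO hlam
        exact ⟨mem_image_of_mem _ h1, (addVertex_odd_some_image G u (g a) a).2 h2⟩
  -- gYZ
  case gYZ =>
    intro v hv hlam
    cases v with
    | none => exact absurd hlam (by simp)
    | some a =>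
        have haO : a ∉ O := fun hx => hv (mem_image_of_mem _ hx)
        obtain ⟨h1, h2⟩ := h.gYZ a haO hlam
        refine ⟨mem_image_of_mem _ h1, ?_⟩
        intro hx
        exact h2 ((addVertex_odd_some_image G u (g a) a).1 hx)
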